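/- arXiv:2412.16261 — 2 statements merged into one kernel-verified Lean document; each statement's English description precedes it below -/
import Mathlib

section
/- Let λ > 0 and let θ, π be real constants with 0 < π < θ. Then for all t ≥ 0, the function f(t) = 1 + (π/(θ − π))·exp(−λθt) − (θ/(θ − π))·exp(−λπt) satisfies 0 ≤ f(t) ≤ 1. -/
open Real

theorem short_term_solution_bounds (lam θ p : ℝ) (hlam : 0 < lam) (hp : 0 < p) (hpθ : p < θ) :
    ∀ t : ℝ, 0 ≤ t →
      0 ≤ 1 + (p / (θ - p)) * Real.exp (-(lam * θ * t)) - (θ / (θ - p)) * Real.exp (-(lam * p * t)) ∧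
      1 + (p / (θ - p)) * Real.exp (-(lam * θ * t)) - (θ / (θ - p)) * Real.exp (-(lam * p * t)) ≤ 1 := by
  have hd : (0:ℝ) < θ - p := by linarith
  intro t ht
  have he : Real.exp (-(lam * θ * t)) ≤ Real.exp (-(lam * p * t)) := by
    apply Real.exp_le_exp.2
    nlinarith [mul_nonneg (mul_nonneg hlam.le ht) hd.le]
  have hep : 0 < Real.exp (-(lam * θ * t)) := Real.exp_pos _
  have hep2 : 0 < Real.exp (-(lam * p * t)) := Real.exp_pos _
  have heq : 1 + (p / (θ - p)) * Real.exp (-(lam * θ * t)) - (θ / (θ - p)) * Real.exp (-(lam * p * t))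
      = 1 - (θ * Real.exp (-(lam * p * t)) - p * Real.exp (-(lam * θ * t))) / (θ - p) := by
    ring
  constructor
  · have key : θ * Real.exp (-(lam * p * t)) - p * Real.exp (-(lam * θ * t)) ≤ θ - p := by
      have hmono : AntitoneOn (fun s : ℝ => θ * Real.exp (-(lam * p * s)) - p * Real.exp (-(lam * θ * s))) (Set.Ici (0:ℝ)) := by
        apply antitoneOn_of_deriv_nonpos (convex_Ici 0)
        · fun_prop
        · apply DifferentiableOn.sub <;> fun_prop
        · intro x hx
          simp only [interior_Ici, Set.mem_Ioi] at hx
          have h1 : HasDerivAt (fun s : ℝ => θ * Real.exp (-(lam * p * s)) - p * Real.exp (-(lam * θ * s)))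
              (θ * (Real.exp (-(lam * p * x)) * (-(lam * p))) - p * (Real.exp (-(lam * θ * x)) * (-(lam * θ)))) x := by
            have hA : HasDerivAt (fun s : ℝ => -(lam * p * s)) (-(lam * p)) x := by
              simpa [Pi.neg_def] using ((hasDerivAt_id x).const_mul (lam * p)).neg
            have hB : HasDerivAt (fun s : ℝ => -(lam * θ * s)) (-(lam * θ)) x := by
              simpa [Pi.neg_def] using ((hasDerivAt_id x).const_mul (lam * θ)).neg
            exact ((hA.exp.const_mul θ).sub (hB.exp.const_mul p))
          rw [h1.deriv]
          have hee : Real.exp (-(lam * θ * x)) ≤ Real.exp (-(lam * p * x)) := by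
            apply Real.exp_le_exp.2
            nlinarith [mul_nonneg (mul_nonneg hlam.le hx.le) hd.le]
          nlinarith [mul_le_mul_of_nonneg_left hee (mul_nonneg (mul_nonneg hlam.le hp.le) (by linarith : (0:ℝ) ≤ θ))]
      have := hmono (Set.self_mem_Ici) (Set.mem_Ici.2 ht) ht
      simpa using this
    have := (div_le_one hd).2 key
    rw [heq]; linarith
  · have hnum : 0 ≤ θ * Real.exp (-(lam * p * t)) - p * Real.exp (-(lam * θ * t)) := by
      nlinarith
    have := div_nonneg hnum (le_of_lt hd)
    rw [heq]; linarith
end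

section
/- Let λ > 0, θ > 0 and 0 < δ < ν be real constants. Define VO₂ : [0, ν] → ℝ piecewise by VO₂(t) = 1 − exp(−λθt) for 0 ≤ t ≤ δ and VO₂(t) = (exp(λθδ) − 1)·exp(−λθt) for δ < t ≤ ν. Then (1/ν)·∫₀^ν VO₂(t) dt = (1/ν)·(δ + (1/(λθ))·exp(−λθν)·(1 − exp(λθδ))) = (1/ν)·(δ − ε), where ε := (exp(−λθν)/(λθ))·(exp(λθδ) − 1). -/
open Real

theorem vo2_homogenized_average (lam θ δ ν : ℝ) (hlam : 0 < lam) (hθ : 0 < θ)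
    (hδ : 0 < δ) (hδν : δ < ν) :
    let VO₂ : ℝ → ℝ := fun t =>
      if t ≤ δ then 1 - Real.exp (-(lam * θ * t))
      else (Real.exp (lam * θ * δ) - 1) * Real.exp (-(lam * θ * t))
    let ε : ℝ := (Real.exp (-(lam * θ * ν)) / (lam * θ)) * (Real.exp (lam * θ * δ) - 1)
    (1 / ν) * ∫ t in (0:ℝ)..ν, VO₂ t =
      (1 / ν) * (δ + (1 / (lam * θ)) * Real.exp (-(lam * θ * ν)) * (1 - Real.exp (lam * θ * δ))) ∧
    (1 / ν) * (δ + (1 / (lam * θ)) * Real.exp (-(lam * θ * ν)) * (1 - Real.exp (lam * θ * δ))) =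
      (1 / ν) * (δ - ε) := by
  intro VO₂ ε
  set k := lam * θ with hk
  have hkpos : 0 < k := mul_pos hlam hθ
  have hkne : k ≠ 0 := ne_of_gt hkpos
  have hjoin : 1 - Real.exp (-(k * δ)) = (Real.exp (k * δ) - 1) * Real.exp (-(k * δ)) := by
    have : Real.exp (k * δ) * Real.exp (-(k * δ)) = 1 := by
      rw [← Real.exp_add]; ring_nf; exact Real.exp_zero
    nlinarith [this]
  have hcont : Continuous VO₂ := by
    apply Continuous.if_le
    · exact continuous_const.sub ((continuous_const.mul continuous_id).neg.rexp)
    · exact continuous_const.mul ((continuous_const.mul continuous_id).neg.rexp)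
    · exact continuous_id
    · exact continuous_const
    · intro x hx
      subst hx
      exact hjoin
  -- split the integral
  have hsplit : (∫ t in (0:ℝ)..ν, VO₂ t) =
      (∫ t in (0:ℝ)..δ, VO₂ t) + ∫ t in δ..ν, VO₂ t := by
    rw [intervalIntegral.integral_add_adjacent_intervals
      (hcont.intervalIntegrable 0 δ) (hcont.intervalIntegrable δ ν)]
  -- first piece
  have h1 : (∫ t in (0:ℝ)..δ, VO₂ t) = ∫ t in (0:ℝ)..δ, (1 - Real.exp (-(k * t))) := by
    apply intervalIntegral.integral_congr
    intro t ht
    rw [Set.uIcc_of_le hδ.le] at ht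
    simp only [VO₂, if_pos ht.2]
    rfl
  have h1' : (∫ t in (0:ℝ)..δ, (1 - Real.exp (-(k * t)))) =
      (δ + Real.exp (-(k * δ)) / k) - (0 + Real.exp (-(k * 0)) / k) := by
    apply intervalIntegral.integral_eq_sub_of_hasDerivAt
    · intro t _
      have hd : HasDerivAt (fun t : ℝ => -(k * t)) (-k) t := by
        simpa using ((hasDerivAt_id t).const_mul k).fun_neg
      have he : HasDerivAt (fun t : ℝ => Real.exp (-(k * t))) (Real.exp (-(k * t)) * (-k)) t :=
        (Real.hasDerivAt_exp _).comp t hd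
      have := (hasDerivAt_id t).fun_add (he.div_const k)
      convert this using 1
      rfl
      field_simp
      ring
    · exact (continuous_const.sub ((continuous_const.mul continuous_id).neg.rexp)).intervalIntegrable 0 δ
  -- second piece
  have h2 : (∫ t in δ..ν, VO₂ t) =
      ∫ t in δ..ν, (Real.exp (k * δ) - 1) * Real.exp (-(k * t)) := by
    rw [intervalIntegral.integral_of_le hδν.le, intervalIntegral.integral_of_le hδν.le]
    apply MeasureTheory.setIntegral_congr_fun measurableSet_Ioc
    intro t ht
    simp only [VO₂, if_neg (not_le.mpr ht.1)]
    rfl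
  have h2' : (∫ t in δ..ν, (Real.exp (k * δ) - 1) * Real.exp (-(k * t))) =
      (-((Real.exp (k * δ) - 1) / k) * Real.exp (-(k * ν))) -
        (-((Real.exp (k * δ) - 1) / k) * Real.exp (-(k * δ))) := by
    apply intervalIntegral.integral_eq_sub_of_hasDerivAt
    · intro t _
      have hd : HasDerivAt (fun t : ℝ => -(k * t)) (-k) t := by
        simpa using ((hasDerivAt_id t).const_mul k).fun_neg
      have he : HasDerivAt (fun t : ℝ => Real.exp (-(k * t))) (Real.exp (-(k * t)) * (-k)) t :=
        (Real.hasDerivAt_exp _).comp t hd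
      have := he.const_mul (-((Real.exp (k * δ) - 1) / k))
      convert this using 1
      rfl
      field_simp
    · exact (continuous_const.mul ((continuous_const.mul continuous_id).neg.rexp)).intervalIntegrable δ ν
  constructor
  · rw [hsplit, h1, h1', h2, h2']
    have hmul : Real.exp (k * δ) * Real.exp (-(k * δ)) = 1 := by
      rw [← Real.exp_add]; ring_nf; exact Real.exp_zero
    have : (δ + Real.exp (-(k * δ)) / k) - (0 + Real.exp (-(k * 0)) / k) +
        ((-((Real.exp (k * δ) - 1) / k) * Real.exp (-(k * ν))) -
          (-((Real.exp (k * δ) - 1) / k) * Real.exp (-(k * δ)))) =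
        δ + 1 / k * Real.exp (-(k * ν)) * (1 - Real.exp (k * δ)) := by
      have h0 : Real.exp (-(k * 0)) = 1 := by norm_num
      rw [h0]
      field_simp
      have hmul' : Real.exp (δ * k) * Real.exp (-(δ * k)) = 1 := by rw [mul_comm δ k]; exact hmul
      nlinarith [hmul']
    rw [this]
  · simp only [ε]
    ring
end
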